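/- Let n ≥ 2, let σ : ℤ → ℤ be an n-periodic bijection, and let s_i be an affine simple transposition. Then |ℓ(σ∘s_i) − ℓ(σ)| = 1, where ℓ(σ) = Σ_{1≤a<b≤n} |⌊(σ(b)−σ(a))/n⌋|. -/

import Mathlib

/-- The affine simple transposition s_i. -/
def affineSimple (n i : ℤ) : ℤ → ℤ := fun j =>
  if j % n = i % n then j + 1 else if j % n = (i + 1) % n then j - 1 else j

/-- Shi length statistic. -/
noncomputable def affineLength (n : ℤ) (σ : ℤ → ℤ) : ℤ :=
  ∑ a ∈ Finset.Icc (1 : ℤ) n, ∑ b ∈ Finset.Icc (1 : ℤ) n,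
    if a < b then |Int.fdiv (σ b - σ a) n| else 0

lemma fdiv_shift {n : ℤ} (hn : 0 < n) (d : ℤ) : Int.fdiv (d + n) n = Int.fdiv d n + 1 := by
  rw [Int.fdiv_eq_ediv_of_nonneg _ hn.le, Int.fdiv_eq_ediv_of_nonneg _ hn.le]
  have := Int.add_mul_ediv_right d 1 hn.ne'
  simpa using this

lemma fdiv_neg_of_not_dvd {n d : ℤ} (hn : 0 < n) (h : ¬ n ∣ d) :
    Int.fdiv (-d) n = -(Int.fdiv d n) - 1 := by
  rw [Int.fdiv_eq_ediv_of_nonneg _ hn.le, Int.fdiv_eq_ediv_of_nonneg _ hn.le]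
  have h1 : d % n + n * (d / n) = d := Int.emod_add_mul_ediv d n
  have h2 : 0 ≤ d % n := Int.emod_nonneg _ hn.ne'
  have h3 : d % n < n := Int.emod_lt_of_pos _ hn
  have h4 : d % n ≠ 0 := fun hc => h (Int.dvd_of_emod_eq_zero hc)
  have key : -d = (n - d % n) + (-(d / n) - 1) * n := by ring_nf; omega
  rw [key, Int.add_mul_ediv_right _ _ hn.ne',
    Int.ediv_eq_zero_of_lt (by omega) (by omega)]
  ring

lemma abs_fdiv_shift_neg {n : ℤ} (hn : 0 < n) {d : ℤ} (h : ¬ n ∣ d) :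
    |Int.fdiv (-d + n) n| = |Int.fdiv d n| := by
  rw [fdiv_shift hn, fdiv_neg_of_not_dvd hn h,
    show -(Int.fdiv d n) - 1 + 1 = -(Int.fdiv d n) by ring, abs_neg]

lemma abs_helper1 (q : ℤ) : |(|(-q - 1)| - |q|)| = 1 := by
  rcases abs_cases (-q - 1) with ⟨e1, h1⟩ | ⟨e1, h1⟩ <;>
    rcases abs_cases q with ⟨e2, h2⟩ | ⟨e2, h2⟩ <;>
      rw [e1, e2, abs_eq (by norm_num : (0:ℤ) ≤ 1)] <;> omega

lemma abs_helper2 (q : ℤ) : |(|(1 - q)| - |q|)| = 1 := by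
  rcases abs_cases (1 - q) with ⟨e1, h1⟩ | ⟨e1, h1⟩ <;>
    rcases abs_cases q with ⟨e2, h2⟩ | ⟨e2, h2⟩ <;>
      rw [e1, e2, abs_eq (by norm_num : (0:ℤ) ≤ 1)] <;> omega

lemma sum_split (S : Finset ℤ) (p q : ℤ) (hp : p ∈ S) (hq : q ∈ S) (hpq : p ≠ q)
    (G : ℤ → ℤ → ℤ) :
    ∑ a ∈ S, ∑ b ∈ S, G a b =
      (∑ a ∈ S \ {p, q}, ∑ b ∈ S \ {p, q}, G a b)
      + (∑ a ∈ S \ {p, q}, (G a p + G a q + G p a + G q a))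
      + (G p p + G p q + G q p + G q q) := by
  have hS : S = insert p (insert q (S \ {p, q})) := by
    ext x
    simp only [Finset.mem_insert, Finset.mem_sdiff, Finset.mem_singleton]
    constructor
    · intro hx
      by_cases h1 : x = p
      · tauto
      · by_cases h2 : x = q <;> tauto
    · rintro (rfl | rfl | ⟨hx, _⟩) <;> assumption
  have hp' : p ∉ insert q (S \ {p, q}) := by
    simp [hpq, Finset.mem_sdiff]
  have hq' : q ∉ S \ {p, q} := by simp
  conv_lhs => rw [hS]
  simp only [Finset.sum_insert hp', Finset.sum_insert hq', Finset.sum_add_distrib]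
  ring

/-- Multiplying by an affine simple transposition changes length by exactly one. -/
theorem stmt_14 (n : ℤ) (hn : 2 ≤ n) (σ : ℤ → ℤ)
    (hbij : Function.Bijective σ) (hper : ∀ i : ℤ, σ (i + n) = σ i + n)
    (i : ℤ) (hi : 1 ≤ i) (hin : i ≤ n) :
    |affineLength n (σ ∘ affineSimple n i) - affineLength n σ| = 1 := by
  have hn0 : (0:ℤ) < n := by omega
  -- extended periodicity
  have hpos : ∀ m : ℕ, ∀ j, σ (j + (m : ℤ) * n) = σ j + (m : ℤ) * n := by
    intro m
    induction m with
    | zero => simp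
    | succ m ih =>
      intro j
      have h1 : j + ((m : ℤ) + 1) * n = (j + (m : ℤ) * n) + n := by ring
      push_cast
      rw [h1, hper, ih]
      ring
  have hper' : ∀ k : ℤ, ∀ j, σ (j + k * n) = σ j + k * n := by
    intro k j
    rcases Int.eq_nat_or_neg k with ⟨m, rfl | rfl⟩
    · exact hpos m j
    · have h1 := hpos m (j + (-(m : ℤ)) * n)
      rw [show j + (-(m : ℤ)) * n + (m : ℤ) * n = j by ring] at h1
      linarith
  -- non-divisibility
  have hndvd : ∀ a b : ℤ, 1 ≤ a → a ≤ n → 1 ≤ b → b ≤ n → a ≠ b →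
      ¬ (n ∣ σ b - σ a) := by
    rintro a b h1 h2 h3 h4 h5 ⟨k, hk⟩
    rw [mul_comm] at hk
    have he : σ (a + k * n) = σ a + k * n := hper' k a
    have hb : σ b = σ (a + k * n) := by rw [he]; omega
    have heq := hbij.injective hb
    rcases lt_trichotomy k 0 with h | h | h
    · nlinarith [mul_le_mul_of_nonneg_right (show k ≤ -1 by omega) (show (0:ℤ) ≤ n by omega)]
    · subst h; omega
    · nlinarith [mul_le_mul_of_nonneg_right (show 1 ≤ k by omega) (show (0:ℤ) ≤ n by omega)]
  -- residues distinguish elements of [1,n]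
  have hmodne : ∀ a b : ℤ, 1 ≤ a → a ≤ n → 1 ≤ b → b ≤ n → a ≠ b →
      a % n ≠ b % n := by
    intro a b h1 h2 h3 h4 h5 h
    have hd : n ∣ (a - b) :=
      Int.dvd_of_emod_eq_zero (Int.emod_eq_emod_iff_emod_sub_eq_zero.mp h)
    obtain ⟨k, hk⟩ := hd
    rw [mul_comm] at hk
    rcases lt_trichotomy k 0 with hc | hc | hc
    · nlinarith [mul_le_mul_of_nonneg_right (show k ≤ -1 by omega) (show (0:ℤ) ≤ n by omega)]
    · subst hc; omega
    · nlinarith [mul_le_mul_of_nonneg_right (show 1 ≤ k by omega) (show (0:ℤ) ≤ n by omega)]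
  rcases eq_or_lt_of_le hin with heq | hilt
  · -- case i = n : special positions are 1 and n
    have heq2 : n = i := heq.symm
    subst heq2
    have hmodn : (n : ℤ) % n = 0 := Int.emod_self
    have hmod1 : (1 : ℤ) % n = 1 := Int.emod_eq_of_lt (by norm_num) (by omega)
    have hmodn1 : (n + 1) % n = 1 := by
      rw [show n + 1 = 1 + n * 1 by ring, Int.add_mul_emod_self_left, hmod1]
    have hs1 : affineSimple n n 1 = 0 := by
      unfold affineSimple
      rw [if_neg (by rw [hmod1, hmodn]; omega), if_pos (by rw [hmod1, hmodn1])]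
      norm_num
    have hsn : affineSimple n n n = n + 1 := by
      unfold affineSimple
      rw [if_pos rfl]
    have hsa : ∀ a : ℤ, 1 < a → a < n → affineSimple n n a = a := by
      intro a h1 h2
      unfold affineSimple
      have hma : a % n = a := Int.emod_eq_of_lt (by omega) h2
      rw [if_neg (by rw [hma, hmodn]; omega), if_neg (by rw [hma, hmodn1]; omega)]
    have hσ0 : σ 0 = σ n - n := by
      have := hper 0; rw [zero_add] at this; omega
    have hσn1 : σ (n + 1) = σ 1 + n := by
      have := hper 1; rw [add_comm] at this; omega
    have hτ1 : (σ ∘ affineSimple n n) 1 = σ n - n := by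
      simp only [Function.comp_apply, hs1]; exact hσ0
    have hτn : (σ ∘ affineSimple n n) n = σ 1 + n := by
      simp only [Function.comp_apply, hsn]; exact hσn1
    have hτa : ∀ a : ℤ, 1 < a → a < n → (σ ∘ affineSimple n n) a = σ a := by
      intro a h1 h2
      simp only [Function.comp_apply, hsa a h1 h2]
    set τ := σ ∘ affineSimple n n with hτdef
    have hp1 : (1 : ℤ) ∈ Finset.Icc (1:ℤ) n := Finset.mem_Icc.mpr ⟨le_refl _, by omega⟩
    have hpn : n ∈ Finset.Icc (1:ℤ) n := Finset.mem_Icc.mpr ⟨by omega, le_refl _⟩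
    have h1n : (1 : ℤ) ≠ n := by omega
    have hsplit1 := sum_split (Finset.Icc 1 n) 1 n hp1 hpn h1n
      (fun a b => if a < b then |Int.fdiv (τ b - τ a) n| else 0)
    have hsplit2 := sum_split (Finset.Icc 1 n) 1 n hp1 hpn h1n
      (fun a b => if a < b then |Int.fdiv (σ b - σ a) n| else 0)
    have hmem : ∀ a : ℤ, a ∈ Finset.Icc (1:ℤ) n \ {1, n} → 1 < a ∧ a < n := by
      intro a ha
      simp only [Finset.mem_sdiff, Finset.mem_Icc, Finset.mem_insert,
        Finset.mem_singleton] at ha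
      omega
    have hblock1 :
        (∑ a ∈ Finset.Icc (1:ℤ) n \ {1, n}, ∑ b ∈ Finset.Icc (1:ℤ) n \ {1, n},
          if a < b then |Int.fdiv (τ b - τ a) n| else 0)
        = ∑ a ∈ Finset.Icc (1:ℤ) n \ {1, n}, ∑ b ∈ Finset.Icc (1:ℤ) n \ {1, n},
          if a < b then |Int.fdiv (σ b - σ a) n| else 0 := by
      refine Finset.sum_congr rfl fun a ha => Finset.sum_congr rfl fun b hb => ?_
      obtain ⟨ha1, ha2⟩ := hmem a ha
      obtain ⟨hb1, hb2⟩ := hmem b hb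
      rw [hτa a ha1 ha2, hτa b hb1 hb2]
    have hblock2 :
        (∑ a ∈ Finset.Icc (1:ℤ) n \ {1, n},
          ((if a < 1 then |Int.fdiv (τ 1 - τ a) n| else 0)
          + (if a < n then |Int.fdiv (τ n - τ a) n| else 0)
          + (if 1 < a then |Int.fdiv (τ a - τ 1) n| else 0)
          + (if n < a then |Int.fdiv (τ a - τ n) n| else 0)))
        = ∑ a ∈ Finset.Icc (1:ℤ) n \ {1, n},
          ((if a < 1 then |Int.fdiv (σ 1 - σ a) n| else 0)
          + (if a < n then |Int.fdiv (σ n - σ a) n| else 0)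
          + (if 1 < a then |Int.fdiv (σ a - σ 1) n| else 0)
          + (if n < a then |Int.fdiv (σ a - σ n) n| else 0)) := by
      refine Finset.sum_congr rfl fun a ha => ?_
      obtain ⟨ha1, ha2⟩ := hmem a ha
      rw [hτa a ha1 ha2, hτ1, hτn]
      simp only [show ¬ a < 1 by omega, show a < n by omega, show 1 < a by omega,
        show ¬ n < a by omega, if_true, if_false]
      have e1 : |Int.fdiv (σ 1 + n - σ a) n| = |Int.fdiv (σ a - σ 1) n| := by
        rw [show σ 1 + n - σ a = -(σ a - σ 1) + n by ring]
        exact abs_fdiv_shift_neg hn0 (hndvd 1 a (le_refl _) (by omega) (by omega)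
          (by omega) (by omega))
      have e2 : |Int.fdiv (σ a - (σ n - n)) n| = |Int.fdiv (σ n - σ a) n| := by
        rw [show σ a - (σ n - n) = -(σ n - σ a) + n by ring]
        exact abs_fdiv_shift_neg hn0 (hndvd a n (by omega) (by omega) (by omega)
          (le_refl _) (by omega))
      rw [e1, e2]
      ring
    have hL : affineLength n τ - affineLength n σ =
        |Int.fdiv (τ n - τ 1) n| - |Int.fdiv (σ n - σ 1) n| := by
      rw [affineLength, affineLength, hsplit1, hsplit2]
      rw [hblock1, hblock2]
      simp only [show ¬ (1:ℤ) < 1 by omega, show (1:ℤ) < n by omega,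
        show ¬ n < (1:ℤ) by omega, show ¬ n < n by omega, if_true, if_false]
      ring
    rw [hL, hτn, hτ1]
    have hQ : Int.fdiv (σ 1 + n - (σ n - n)) n = 1 - Int.fdiv (σ n - σ 1) n := by
      rw [show σ 1 + n - (σ n - n) = (-(σ n - σ 1) + n) + n by ring,
        fdiv_shift hn0, fdiv_shift hn0,
        fdiv_neg_of_not_dvd hn0 (hndvd 1 n (le_refl _) (by omega) (by omega)
          (le_refl _) (by omega))]
      ring
    rw [hQ]
    exact abs_helper2 _
  · -- case i < n : special positions are i and i+1
    have hsi : affineSimple n i i = i + 1 := by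
      unfold affineSimple
      rw [if_pos rfl]
    have hsq : affineSimple n i (i + 1) = i := by
      unfold affineSimple
      rw [if_neg (hmodne (i+1) i (by omega) (by omega) hi hin (by omega)),
        if_pos rfl]
      ring
    have hsa : ∀ a : ℤ, 1 ≤ a → a ≤ n → a ≠ i → a ≠ i + 1 →
        affineSimple n i a = a := by
      intro a h1 h2 h3 h4
      unfold affineSimple
      rw [if_neg (hmodne a i h1 h2 hi hin h3),
        if_neg (hmodne a (i+1) h1 h2 (by omega) (by omega) h4)]
    have hτp : (σ ∘ affineSimple n i) i = σ (i + 1) := by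
      simp only [Function.comp_apply, hsi]
    have hτq : (σ ∘ affineSimple n i) (i + 1) = σ i := by
      simp only [Function.comp_apply, hsq]
    have hτa : ∀ a : ℤ, 1 ≤ a → a ≤ n → a ≠ i → a ≠ i + 1 →
        (σ ∘ affineSimple n i) a = σ a := by
      intro a h1 h2 h3 h4
      simp only [Function.comp_apply, hsa a h1 h2 h3 h4]
    set τ := σ ∘ affineSimple n i with hτdef
    have hpi : i ∈ Finset.Icc (1:ℤ) n := Finset.mem_Icc.mpr ⟨hi, hin⟩
    have hpq : i + 1 ∈ Finset.Icc (1:ℤ) n := Finset.mem_Icc.mpr ⟨by omega, by omega⟩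
    have hne : i ≠ i + 1 := by omega
    have hsplit1 := sum_split (Finset.Icc 1 n) i (i+1) hpi hpq hne
      (fun a b => if a < b then |Int.fdiv (τ b - τ a) n| else 0)
    have hsplit2 := sum_split (Finset.Icc 1 n) i (i+1) hpi hpq hne
      (fun a b => if a < b then |Int.fdiv (σ b - σ a) n| else 0)
    have hmem : ∀ a : ℤ, a ∈ Finset.Icc (1:ℤ) n \ {i, i+1} →
        1 ≤ a ∧ a ≤ n ∧ a ≠ i ∧ a ≠ i + 1 := by
      intro a ha
      simp only [Finset.mem_sdiff, Finset.mem_Icc, Finset.mem_insert,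
        Finset.mem_singleton] at ha
      tauto
    have hblock1 :
        (∑ a ∈ Finset.Icc (1:ℤ) n \ {i, i+1}, ∑ b ∈ Finset.Icc (1:ℤ) n \ {i, i+1},
          if a < b then |Int.fdiv (τ b - τ a) n| else 0)
        = ∑ a ∈ Finset.Icc (1:ℤ) n \ {i, i+1}, ∑ b ∈ Finset.Icc (1:ℤ) n \ {i, i+1},
          if a < b then |Int.fdiv (σ b - σ a) n| else 0 := by
      refine Finset.sum_congr rfl fun a ha => Finset.sum_congr rfl fun b hb => ?_
      obtain ⟨ha1, ha2, ha3, ha4⟩ := hmem a ha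
      obtain ⟨hb1, hb2, hb3, hb4⟩ := hmem b hb
      rw [hτa a ha1 ha2 ha3 ha4, hτa b hb1 hb2 hb3 hb4]
    have hblock2 :
        (∑ a ∈ Finset.Icc (1:ℤ) n \ {i, i+1},
          ((if a < i then |Int.fdiv (τ i - τ a) n| else 0)
          + (if a < i + 1 then |Int.fdiv (τ (i+1) - τ a) n| else 0)
          + (if i < a then |Int.fdiv (τ a - τ i) n| else 0)
          + (if i + 1 < a then |Int.fdiv (τ a - τ (i+1)) n| else 0)))
        = ∑ a ∈ Finset.Icc (1:ℤ) n \ {i, i+1},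
          ((if a < i then |Int.fdiv (σ i - σ a) n| else 0)
          + (if a < i + 1 then |Int.fdiv (σ (i+1) - σ a) n| else 0)
          + (if i < a then |Int.fdiv (σ a - σ i) n| else 0)
          + (if i + 1 < a then |Int.fdiv (σ a - σ (i+1)) n| else 0)) := by
      refine Finset.sum_congr rfl fun a ha => ?_
      obtain ⟨ha1, ha2, ha3, ha4⟩ := hmem a ha
      rw [hτa a ha1 ha2 ha3 ha4, hτp, hτq]
      rcases (show a < i ∨ i + 1 < a by omega) with h | h
      · simp only [show a < i from h, show a < i + 1 by omega, show ¬ i < a by omega,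
          show ¬ i + 1 < a by omega, if_true, if_false]
        ring
      · simp only [show ¬ a < i by omega, show ¬ a < i + 1 by omega,
          show i < a by omega, show i + 1 < a from h, if_true, if_false]
        ring
    have hL : affineLength n τ - affineLength n σ =
        |Int.fdiv (τ (i+1) - τ i) n| - |Int.fdiv (σ (i+1) - σ i) n| := by
      rw [affineLength, affineLength, hsplit1, hsplit2]
      rw [hblock1, hblock2]
      simp only [show ¬ i < i by omega, show i < i + 1 by omega,
        show ¬ i + 1 < i by omega, show ¬ i + 1 < i + 1 by omega, if_true, if_false]
      ring
    rw [hL, hτp, hτq]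
    have hQ : Int.fdiv (σ i - σ (i+1)) n = -(Int.fdiv (σ (i+1) - σ i) n) - 1 := by
      rw [show σ i - σ (i+1) = -(σ (i+1) - σ i) by ring]
      exact fdiv_neg_of_not_dvd hn0 (hndvd i (i+1) hi hin (by omega) (by omega)
        (by omega))
    rw [hQ]
    exact abs_helper1 _
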